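/- (Antichain normal form.) Let T=(V,E) be an unweighted tree with deterministic Graph-IRV, let u∈V and A⊆V\{u}, and root T at u. If Kill(T,u,A) holds, then there exists a witness candidate set K={u}∪F with F⊆A such that F is an antichain with respect to the ancestor–descendant relation of T rooted at u (no element of F is a proper ancestor of another element of F), and u is eliminated in round 1 of the IRV execution on K. -/

import Mathlib

section IRVCore

variable {V : Type*} [Fintype V] [DecidableEq V] [Nonempty V]

/-- The preference key of voter `x` for candidate `c`: lexicographic in
(distance, candidate id), smaller preferred. -/
def voterKey (d : V → V → ℕ) (idv : V → ℕ) (x c : V) : Lex (ℕ × ℕ) :=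
  toLex (d x c, idv c)

/-- Voter `x`'s top remaining candidate among the candidate set `K`. -/
noncomputable def topChoice (d : V → V → ℕ) (idv : V → ℕ) (x : V) (K : Finset V) : V :=
  if h : K.Nonempty then (Finset.exists_min_image K (voterKey d idv x) h).choose
  else Classical.arbitrary V

/-- Plurality score of candidate `c` within candidate set `K`. -/
noncomputable def plurality (d : V → V → ℕ) (idv : V → ℕ) (K : Finset V) (c : V) : ℕ :=
  (Finset.univ.filter fun x : V => topChoice d idv x K = c).card

/-- Elimination key: minimize plurality score, break ties toward the largest id. -/
noncomputable def elimKey (d : V → V → ℕ) (idv : V → ℕ) (K : Finset V) (c : V) :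
    Lex (ℤ × ℤ) :=
  toLex ((plurality d idv K c : ℤ), -(idv c : ℤ))

/-- The candidate eliminated in the current round. -/
noncomputable def roundLoser (d : V → V → ℕ) (idv : V → ℕ) (K : Finset V) : V :=
  if h : K.Nonempty then (Finset.exists_min_image K (elimKey d idv K) h).choose
  else Classical.arbitrary V

lemma roundLoser_mem (d : V → V → ℕ) (idv : V → ℕ) {K : Finset V} (h : K.Nonempty) :
    roundLoser d idv K ∈ K := by
  unfold roundLoser
  rw [dif_pos h]
  exact (Finset.exists_min_image K (elimKey d idv K) h).choose_spec.1

/-- The IRV winner on candidate set `K`. -/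
noncomputable def irvWinner (d : V → V → ℕ) (idv : V → ℕ) (K : Finset V) : V :=
  if h : 2 ≤ K.card then irvWinner d idv (K.erase (roundLoser d idv K))
  else if h2 : K.Nonempty then h2.choose else Classical.arbitrary V
termination_by K.card
decreasing_by
  exact Finset.card_erase_lt_of_mem (roundLoser_mem d idv (Finset.card_pos.mp (by omega)))

/-- `Kill d idv u A`: some candidate set `K` with `u ∈ K ⊆ A ∪ {u}` makes `u` lose. -/
def Kill (d : V → V → ℕ) (idv : V → ℕ) (u : V) (A : Set V) : Prop :=
  ∃ K : Finset V, u ∈ K ∧ ↑K ⊆ insert u A ∧ irvWinner d idv K ≠ u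

/-- `S` is an IRV exclusion zone. -/
def ExclusionZone (d : V → V → ℕ) (idv : V → ℕ) (S : Set V) : Prop :=
  ∀ K : Finset V, K.Nonempty → (∃ c ∈ K, c ∈ S) → irvWinner d idv K ∈ S

end IRVCore

/-- In a tree with distance function `d`, rooted at `u`: vertex `a` is an ancestor of `b`
(i.e. `a` lies on the unique path from the root `u` to `b`). -/
def IsAncestor {V : Type*} (d : V → V → ℕ) (u a b : V) : Prop :=
  d u a + d a b = d u b

section AuxIRV

variable {V : Type*} [Fintype V] [DecidableEq V] [Nonempty V]

lemma topChoice_mem (d : V → V → ℕ) (idv : V → ℕ) (x : V) {K : Finset V} (h : K.Nonempty) :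
    topChoice d idv x K ∈ K := by
  unfold topChoice
  rw [dif_pos h]
  exact (Finset.exists_min_image K (voterKey d idv x) h).choose_spec.1

lemma topChoice_min (d : V → V → ℕ) (idv : V → ℕ) (x : V) {K : Finset V} (h : K.Nonempty)
    {c : V} (hc : c ∈ K) : voterKey d idv x (topChoice d idv x K) ≤ voterKey d idv x c := by
  unfold topChoice
  rw [dif_pos h]
  exact (Finset.exists_min_image K (voterKey d idv x) h).choose_spec.2 c hc

lemma roundLoser_min (d : V → V → ℕ) (idv : V → ℕ) {K : Finset V} (h : K.Nonempty)
    {c : V} (hc : c ∈ K) : elimKey d idv K (roundLoser d idv K) ≤ elimKey d idv K c := by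
  unfold roundLoser
  rw [dif_pos h]
  exact (Finset.exists_min_image K (elimKey d idv K) h).choose_spec.2 c hc

lemma topChoice_eq {d : V → V → ℕ} {idv : V → ℕ} (hid : Function.Injective idv) {x c : V}
    {K : Finset V} (hc : c ∈ K)
    (hmin : ∀ c' ∈ K, voterKey d idv x c ≤ voterKey d idv x c') :
    topChoice d idv x K = c := by
  have hne : K.Nonempty := ⟨c, hc⟩
  have h1 := topChoice_min d idv x hne hc
  have h2 := hmin _ (topChoice_mem d idv x hne)
  have h3 : voterKey d idv x (topChoice d idv x K) = voterKey d idv x c := le_antisymm h1 h2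
  unfold voterKey at h3
  exact hid (congrArg Prod.snd (toLex.injective h3))

lemma topChoice_of_subset {d : V → V → ℕ} {idv : V → ℕ} (hid : Function.Injective idv)
    {x : V} {K K₀ : Finset V} (hsub : K ⊆ K₀) (hK₀ : K₀.Nonempty)
    (hmem : topChoice d idv x K₀ ∈ K) : topChoice d idv x K = topChoice d idv x K₀ :=
  topChoice_eq hid hmem (fun _ hc => topChoice_min d idv x hK₀ (hsub hc))

lemma roundLoser_eq {d : V → V → ℕ} {idv : V → ℕ} (hid : Function.Injective idv) {c : V}
    {K : Finset V} (hc : c ∈ K)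
    (hmin : ∀ c' ∈ K, elimKey d idv K c ≤ elimKey d idv K c') :
    roundLoser d idv K = c := by
  have hne : K.Nonempty := ⟨c, hc⟩
  have h1 := roundLoser_min d idv hne hc
  have h2 := hmin _ (roundLoser_mem d idv hne)
  have h3 : elimKey d idv K (roundLoser d idv K) = elimKey d idv K c := le_antisymm h1 h2
  unfold elimKey at h3
  have h5 : -(idv (roundLoser d idv K) : ℤ) = -(idv c : ℤ) :=
    congrArg Prod.snd (toLex.injective h3)
  have h6 : idv (roundLoser d idv K) = idv c := by exact_mod_cast neg_injective h5
  exact hid h6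

lemma irvWinner_step (d : V → V → ℕ) (idv : V → ℕ) {K : Finset V} (h : 2 ≤ K.card) :
    irvWinner d idv K = irvWinner d idv (K.erase (roundLoser d idv K)) := by
  conv_lhs => rw [irvWinner]
  rw [dif_pos h]

lemma irvWinner_mem (d : V → V → ℕ) (idv : V → ℕ) :
    ∀ K : Finset V, K.Nonempty → irvWinner d idv K ∈ K := by
  intro K
  induction K using Finset.strongInductionOn with
  | _ K ih =>
    intro hK
    by_cases h : 2 ≤ K.card
    · rw [irvWinner_step d idv h]
      have hl := roundLoser_mem d idv hK
      have hss : K.erase (roundLoser d idv K) ⊂ K := Finset.erase_ssubset hl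
      have hne : (K.erase (roundLoser d idv K)).Nonempty := by
        rw [← Finset.card_pos, Finset.card_erase_of_mem hl]; omega
      exact Finset.erase_subset _ _ (ih _ hss hne)
    · rw [irvWinner, dif_neg h, dif_pos hK]
      exact hK.choose_spec

lemma exists_elim_round (d : V → V → ℕ) (idv : V → ℕ) (u : V) :
    ∀ K : Finset V, u ∈ K → irvWinner d idv K ≠ u →
      ∃ K' : Finset V, u ∈ K' ∧ K' ⊆ K ∧ roundLoser d idv K' = u ∧ irvWinner d idv K' ≠ u := by
  intro K
  induction K using Finset.strongInductionOn with
  | _ K ih =>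
    intro hu hw
    by_cases hl : roundLoser d idv K = u
    · exact ⟨K, hu, subset_rfl, hl, hw⟩
    · have hK : K.Nonempty := ⟨u, hu⟩
      have h2 : 2 ≤ K.card := by
        by_contra h
        rw [irvWinner, dif_neg h, dif_pos hK] at hw
        have h1 : K.card = 1 := by
          have := Finset.card_pos.mpr hK; omega
        obtain ⟨a, ha⟩ := Finset.card_eq_one.mp h1
        subst ha
        simp only [Finset.mem_singleton] at hu
        have := hK.choose_spec
        simp only [Finset.mem_singleton] at this
        exact hw (this.trans hu.symm)
      have hlm := roundLoser_mem d idv hK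
      have hss : K.erase (roundLoser d idv K) ⊂ K := Finset.erase_ssubset hlm
      have hu' : u ∈ K.erase (roundLoser d idv K) :=
        Finset.mem_erase.mpr ⟨fun h => hl (h ▸ rfl), hu⟩
      rw [irvWinner_step d idv h2] at hw
      obtain ⟨K', h1, h2', h3, h4⟩ := ih _ hss hu' hw
      exact ⟨K', h1, h2'.trans (Finset.erase_subset _ _), h3, h4⟩

end AuxIRV

section AuxTree

lemma dist_split_le {V : Type*} {G : SimpleGraph V} [DecidableEq V] {x c a : V}
    (p : G.Walk x c) (hp : p.length = G.dist x c) (ha : a ∈ p.support) :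
    G.dist x a + G.dist a c ≤ G.dist x c := by
  have hsp := congrArg SimpleGraph.Walk.length (p.take_spec ha)
  rw [SimpleGraph.Walk.length_append] at hsp
  calc G.dist x a + G.dist a c
      ≤ (p.takeUntil a ha).length + (p.dropUntil a ha).length :=
        add_le_add (SimpleGraph.dist_le _) (SimpleGraph.dist_le _)
    _ = p.length := hsp
    _ = G.dist x c := hp

lemma tree_between {V : Type*} [DecidableEq V] {G : SimpleGraph V} (hG : G.IsTree) {u a c x : V}
    (hanc : G.dist u a + G.dist a c = G.dist u c) (hau : a ≠ u) (hac : a ≠ c)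
    (hx : G.dist x u ≤ G.dist x a) : G.dist x u < G.dist x c := by
  have hconn := hG.isConnected
  obtain ⟨t1, ht1⟩ := hconn.exists_walk_length_eq_dist u a
  obtain ⟨t2, ht2⟩ := hconn.exists_walk_length_eq_dist a c
  have hw0len : (t1.append t2).length = G.dist u c := by
    rw [SimpleGraph.Walk.length_append, ht1, ht2, hanc]
  have hw0path : (t1.append t2).IsPath :=
    SimpleGraph.Walk.isPath_of_length_eq_dist _ hw0len
  have haw0 : a ∈ (t1.append t2).support :=
    (SimpleGraph.Walk.mem_support_append_iff _ _).mpr (Or.inl t1.end_mem_support)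
  obtain ⟨q, hq⟩ := hconn.exists_walk_length_eq_dist x c
  by_cases haq : a ∈ q.support
  · have h1 := dist_split_le q hq haq
    have h2 : 0 < G.dist a c := hconn.pos_dist_of_ne hac
    omega
  · obtain ⟨p, hp⟩ := hconn.exists_walk_length_eq_dist x u
    have huniq := SimpleGraph.isAcyclic_iff_path_unique.mp hG.IsAcyclic
    set w : G.Walk u c := p.reverse.append q with hwdef
    have hPeq : (⟨w.bypass, w.bypass_isPath⟩ : G.Path u c) = ⟨t1.append t2, hw0path⟩ :=
      huniq _ _
    have hval : w.bypass = t1.append t2 := congrArg Subtype.val hPeq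
    have haw : a ∈ w.support := w.support_bypass_subset (hval ▸ haw0)
    rw [hwdef, SimpleGraph.Walk.mem_support_append_iff] at haw
    have hap : a ∈ p.support := by
      rcases haw with h | h
      · rw [SimpleGraph.Walk.support_reverse, List.mem_reverse] at h; exact h
      · exact absurd h haq
    have h1 := dist_split_le p hp hap
    have h2 : 0 < G.dist a u := hconn.pos_dist_of_ne hau
    omega

lemma isAncestor_refl {V : Type*} {G : SimpleGraph V} (u a : V) :
    IsAncestor G.dist u a a := by
  unfold IsAncestor
  rw [SimpleGraph.dist_self]; omega

lemma isAncestor_trans {V : Type*} {G : SimpleGraph V} (hconn : G.Connected) {u a b c : V}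
    (h1 : IsAncestor G.dist u a b) (h2 : IsAncestor G.dist u b c) :
    IsAncestor G.dist u a c := by
  unfold IsAncestor at *
  have t1 := hconn.dist_triangle (u := u) (v := a) (w := c)
  have t2 := hconn.dist_triangle (u := a) (v := b) (w := c)
  omega

end AuxTree

/-- **Antichain normal form.** If `Kill(T,u,A)` holds then there is a witness set
`K = {u} ∪ F` with `F ⊆ A` an antichain w.r.t. the ancestor–descendant relation of `T`
rooted at `u`, such that `u` loses and is eliminated in round 1. -/
theorem antichain_normal_form {V : Type*} [Fintype V] [DecidableEq V] [Nonempty V]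
    (G : SimpleGraph V) (hG : G.IsTree)
    (idv : V → ℕ) (hid : Function.Injective idv)
    (u : V) (A : Set V) (hA : u ∉ A)
    (hkill : Kill G.dist idv u A) :
    ∃ F : Finset V, ↑F ⊆ A ∧
      (∀ a ∈ F, ∀ b ∈ F, a ≠ b → ¬ IsAncestor G.dist u a b) ∧
      irvWinner G.dist idv (insert u F) ≠ u ∧
      roundLoser G.dist idv (insert u F) = u := by
  classical
  obtain ⟨K0, huK0, hK0A, hwK0⟩ := hkill
  obtain ⟨K', huK', hK'sub, hloser, hwin⟩ := exists_elim_round G.dist idv u K0 huK0 hwK0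
  have hconn := hG.isConnected
  have hins : insert u (K'.erase u) = K' := Finset.insert_erase huK'
  have hF₀A : ∀ x ∈ K'.erase u, x ∈ A := by
    intro x hx
    have hxu : x ≠ u := (Finset.mem_erase.mp hx).1
    have hxK0 : x ∈ K0 := hK'sub (Finset.mem_of_mem_erase hx)
    rcases Set.mem_insert_iff.mp (hK0A hxK0) with h | h
    · exact absurd h hxu
    · exact h
  set F : Finset V :=
    (K'.erase u).filter (fun b => ∀ a ∈ K'.erase u, a ≠ b → ¬ IsAncestor G.dist u a b)
    with hFdef
  have hFF₀ : F ⊆ K'.erase u := Finset.filter_subset _ _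
  have huF₀ : u ∉ K'.erase u := Finset.notMem_erase u K'
  have huF : u ∉ F := fun h => huF₀ (hFF₀ h)
  have hFA : ↑F ⊆ A := by
    intro x hx
    exact hF₀A x (hFF₀ (Finset.mem_coe.mp hx))
  -- every element of the base set has an ancestor in F
  have hanc_exists : ∀ c ∈ K'.erase u, ∃ a ∈ F, IsAncestor G.dist u a c := by
    have key : ∀ n : ℕ, ∀ c ∈ K'.erase u, G.dist u c ≤ n →
        ∃ a ∈ F, IsAncestor G.dist u a c := by
      intro n
      induction n with
      | zero =>
        intro c hc hle
        have h0 : G.dist u c = 0 := Nat.le_zero.mp hle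
        have : u = c := hconn.dist_eq_zero_iff.mp h0
        exact absurd (this ▸ hc) huF₀
      | succ n ih =>
        intro c hc hle
        by_cases hmin : ∀ a ∈ K'.erase u, a ≠ c → ¬ IsAncestor G.dist u a c
        · exact ⟨c, Finset.mem_filter.mpr ⟨hc, hmin⟩, isAncestor_refl u c⟩
        · push_neg at hmin
          obtain ⟨a', ha'F₀, ha'ne, hanc⟩ := hmin
          have hpos : 0 < G.dist a' c := hconn.pos_dist_of_ne ha'ne
          have hlt : G.dist u a' < G.dist u c := by
            unfold IsAncestor at hanc; omega
          obtain ⟨a, haF, h2⟩ := ih a' ha'F₀ (by omega)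
          exact ⟨a, haF, isAncestor_trans hconn h2 hanc⟩
    intro c hc
    exact key (G.dist u c) c hc le_rfl
  have hF₀ne : (K'.erase u).Nonempty := by
    rw [Finset.nonempty_iff_ne_empty]
    intro h
    have hKu : K' = {u} := by rw [← hins, h]; rfl
    rw [hKu] at hwin
    have hcard : ¬ 2 ≤ ({u} : Finset V).card := by simp
    rw [irvWinner, dif_neg hcard, dif_pos (Finset.singleton_nonempty u)] at hwin
    exact hwin (Finset.mem_singleton.mp (Finset.singleton_nonempty u).choose_spec)
  obtain ⟨c0, hc0⟩ := hF₀ne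
  obtain ⟨a0, ha0F, -⟩ := hanc_exists c0 hc0
  have hFne : F.Nonempty := ⟨a0, ha0F⟩
  have hantichain : ∀ a ∈ F, ∀ b ∈ F, a ≠ b → ¬ IsAncestor G.dist u a b := by
    intro a ha b hb hab
    exact (Finset.mem_filter.mp hb).2 a (hFF₀ ha) hab
  have hKsub : insert u F ⊆ K' := by
    intro y hy
    rcases Finset.mem_insert.mp hy with rfl | hyF
    · exact huK'
    · exact Finset.mem_of_mem_erase (hFF₀ hyF)
  have hKne : (insert u F).Nonempty := Finset.insert_nonempty _ _
  have hK'ne : K'.Nonempty := ⟨u, huK'⟩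
  -- voters who top u on the small set also top u on K'
  have topA : ∀ x, topChoice G.dist idv x (insert u F) = u → topChoice G.dist idv x K' = u := by
    intro x hx
    apply topChoice_eq hid huK'
    intro c hcK'
    rcases eq_or_ne c u with rfl | hcu
    · exact le_rfl
    · have hcF₀ : c ∈ K'.erase u := Finset.mem_erase.mpr ⟨hcu, hcK'⟩
      obtain ⟨a, haF, hanc⟩ := hanc_exists c hcF₀
      have hkey_ua : voterKey G.dist idv x u ≤ voterKey G.dist idv x a := by
        have h := topChoice_min G.dist idv x hKne (Finset.mem_insert_of_mem haF)
        rw [hx] at h; exact h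
      rcases eq_or_ne a c with rfl | hacne
      · exact hkey_ua
      · have hau : a ≠ u := fun h => huF₀ (h ▸ hFF₀ haF)
        have hdua : G.dist x u ≤ G.dist x a := by
          unfold voterKey at hkey_ua
          rcases (Prod.Lex.le_iff).mp hkey_ua with h | ⟨h, _⟩
          · exact le_of_lt h
          · exact le_of_eq h
        have hlt : G.dist x u < G.dist x c := tree_between hG hanc hau hacne hdua
        unfold voterKey
        exact le_of_lt ((Prod.Lex.lt_iff).mpr (Or.inl hlt))
  have hpu : plurality G.dist idv (insert u F) u ≤ plurality G.dist idv K' u := by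
    apply Finset.card_le_card
    intro x hx
    rw [Finset.mem_filter] at hx ⊢
    exact ⟨hx.1, topA x hx.2⟩
  have hpa : ∀ a ∈ F, plurality G.dist idv K' a ≤ plurality G.dist idv (insert u F) a := by
    intro a haF
    apply Finset.card_le_card
    intro x hx
    rw [Finset.mem_filter] at hx ⊢
    refine ⟨hx.1, ?_⟩
    have hmem : topChoice G.dist idv x K' ∈ insert u F := by
      rw [hx.2]; exact Finset.mem_insert_of_mem haF
    rw [topChoice_of_subset hid hKsub hK'ne hmem]
    exact hx.2
  have hL : roundLoser G.dist idv (insert u F) = u := by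
    apply roundLoser_eq hid (Finset.mem_insert_self u F)
    intro c hc
    rcases Finset.mem_insert.mp hc with rfl | hcF
    · exact le_rfl
    · have hold : elimKey G.dist idv K' u ≤ elimKey G.dist idv K' c := by
        have h := roundLoser_min G.dist idv hK'ne (hKsub hc)
        rw [hloser] at h; exact h
      have hpc := hpa c hcF
      unfold elimKey at hold ⊢
      rw [Prod.Lex.le_iff] at hold ⊢
      simp only [ofLex_toLex] at hold ⊢
      rcases hold with h | ⟨h, h2⟩
      · left
        have h' : plurality G.dist idv K' u < plurality G.dist idv K' c := by exact_mod_cast h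
        have hfin : plurality G.dist idv (insert u F) u <
            plurality G.dist idv (insert u F) c := by omega
        exact_mod_cast hfin
      · have h' : plurality G.dist idv K' u = plurality G.dist idv K' c := by exact_mod_cast h
        have hle : plurality G.dist idv (insert u F) u ≤
            plurality G.dist idv (insert u F) c := by omega
        rcases lt_or_eq_of_le hle with hlt | heq
        · left; exact_mod_cast hlt
        · right; exact ⟨by exact_mod_cast heq, h2⟩
  have hcard2 : 2 ≤ (insert u F).card := by
    rw [Finset.card_insert_of_notMem huF]
    have := Finset.card_pos.mpr hFne
    omega
  have hwinner : irvWinner G.dist idv (insert u F) ≠ u := by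
    rw [irvWinner_step G.dist idv hcard2, hL, Finset.erase_insert huF]
    intro h
    exact huF (h ▸ irvWinner_mem G.dist idv F hFne)
  exact ⟨F, hFA, hantichain, hwinner, hL⟩
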